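/- For all real a, b, c, ρ > 0: (a t^{1+ρ} − b t + c ≥ 0 for all t > 0) if and only if a ≥ (ρ/c)^ρ (b/(1+ρ))^{1+ρ}. -/

import Mathlib

open Real

theorem poly_nonneg_iff (a b c ρ : ℝ) (ha : 0 < a) (hb : 0 < b) (hc : 0 < c) (hρ : 0 < ρ) :
    (∀ t : ℝ, 0 < t → 0 ≤ a * t ^ (1 + ρ) - b * t + c) ↔
      (ρ / c) ^ ρ * (b / (1 + ρ)) ^ (1 + ρ) ≤ a := by
  have h1ρ : (0:ℝ) < 1 + ρ := by linarith
  set K : ℝ := ρ * b / (c * (1 + ρ)) with hKdef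
  have hK : 0 < K := by positivity
  -- key reformulation: RHS ↔ K^ρ * b ≤ (1+ρ) * a
  have hEq : (ρ / c) ^ ρ * (b / (1 + ρ)) ^ (1 + ρ) * (1 + ρ) = K ^ ρ * b := by
    rw [Real.rpow_add (by positivity), Real.rpow_one, hKdef,
      (div_mul_div_comm ρ c b (1 + ρ)).symm,
      Real.mul_rpow (by positivity) (by positivity)]
    rw [show (ρ/c)^ρ * (b/(1+ρ) * (b/(1+ρ))^ρ) * (1+ρ)
        = (ρ/c)^ρ * (b/(1+ρ))^ρ * (b/(1+ρ) * (1+ρ)) by ring,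
      div_mul_cancel₀ b h1ρ.ne']
  have hIff : (ρ / c) ^ ρ * (b / (1 + ρ)) ^ (1 + ρ) ≤ a ↔ K ^ ρ * b ≤ (1 + ρ) * a := by
    rw [← hEq]
    constructor
    · intro h; nlinarith
    · intro h; nlinarith
  rw [hIff]
  constructor
  · -- plug in the minimizer
    intro h
    set s : ℝ := (b / ((1 + ρ) * a)) ^ ρ⁻¹ with hsdef
    have hs : 0 < s := by positivity
    have hsρ : s ^ ρ = b / ((1 + ρ) * a) :=
      Real.rpow_inv_rpow (by positivity) hρ.ne'
    have hfs := h s hs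
    have hs1ρ : s ^ (1 + ρ) = s * (b / ((1 + ρ) * a)) := by
      rw [Real.rpow_add hs, Real.rpow_one, hsρ]
    have hmin : (1 + ρ) * (a * s ^ (1 + ρ)) = s * b := by
      rw [hs1ρ]; field_simp
    have hsle : s ≤ c * (1 + ρ) / (b * ρ) := by
      rw [le_div_iff₀ (by positivity)]
      nlinarith [mul_nonneg hfs h1ρ.le, hmin]
    have hKs : K * s ≤ 1 := by
      rw [hKdef]
      rw [le_div_iff₀ (by positivity)] at hsle
      rw [div_mul_eq_mul_div, div_le_one (by positivity)]
      nlinarith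
    have : (K * s) ^ ρ ≤ 1 := Real.rpow_le_one (by positivity) hKs hρ.le
    rw [Real.mul_rpow hK.le hs.le, hsρ] at this
    have h2 : K ^ ρ * b / ((1 + ρ) * a) ≤ 1 := by rw [mul_div_assoc]; exact this
    rw [div_le_one (by positivity)] at h2
    exact h2
  · -- Young's inequality direction
    intro h t ht
    have hpq : (1 + ρ).HolderConjugate ((1 + ρ) / ρ) := by
      rw [Real.holderConjugate_iff]; constructor
      · linarith
      · field_simp
    set M : ℝ := ((1 + ρ) * a) ^ (1 + ρ)⁻¹ with hMdef
    have hM : 0 < M := by positivity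
    have hMp : M ^ (1 + ρ) = (1 + ρ) * a :=
      Real.rpow_inv_rpow (by positivity) h1ρ.ne'
    have young := Real.young_inequality_of_nonneg (a := M * t) (b := b / M)
      (by positivity) (by positivity) hpq
    have huv : M * t * (b / M) = b * t := by field_simp
    have hup : (M * t) ^ (1 + ρ) / (1 + ρ) = a * t ^ (1 + ρ) := by
      rw [Real.mul_rpow hM.le ht.le, hMp]; field_simp
    have hvq : (b / M) ^ ((1 + ρ) / ρ) / ((1 + ρ) / ρ) ≤ c := by
      rw [div_le_iff₀ (by positivity)]
      have hMq : M ^ ((1 + ρ) / ρ) = ((1 + ρ) * a) ^ ρ⁻¹ := by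
        rw [hMdef, ← Real.rpow_mul (by positivity)]
        congr 1
        field_simp
      have hexp : (1 + ρ) / ρ = 1 + ρ⁻¹ := by field_simp; ring
      have key : K * b ^ ρ⁻¹ ≤ ((1 + ρ) * a) ^ ρ⁻¹ := by
        have := Real.rpow_le_rpow (by positivity) h (by positivity : (0:ℝ) ≤ ρ⁻¹)
        rwa [Real.mul_rpow (by positivity) hb.le,
          Real.rpow_rpow_inv hK.le hρ.ne'] at this
      have hbq : b ^ ((1 + ρ) / ρ) = b * b ^ ρ⁻¹ := by
        rw [hexp, Real.rpow_add hb, Real.rpow_one]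
      have hcK : c * ((1 + ρ) / ρ) * K = b := by
        rw [hKdef]; field_simp
      rw [Real.div_rpow hb.le hM.le, hMq, hbq, div_le_iff₀ (by positivity)]
      calc b * b ^ ρ⁻¹ = c * ((1 + ρ) / ρ) * (K * b ^ ρ⁻¹) := by rw [← mul_assoc, hcK]
      _ ≤ c * ((1 + ρ) / ρ) * ((1 + ρ) * a) ^ ρ⁻¹ := by
          apply mul_le_mul_of_nonneg_left key (by positivity)
    have hbt : b * t ≤ a * t ^ (1 + ρ) + c := by
      calc b * t = M * t * (b / M) := huv.symm
      _ ≤ (M * t) ^ (1 + ρ) / (1 + ρ) + (b / M) ^ ((1 + ρ) / ρ) / ((1 + ρ) / ρ) := young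
      _ ≤ a * t ^ (1 + ρ) + c := by rw [hup]; linarith [hvq]
    linarith
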